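/- Let G be a connected graph whose spanning tree T is a path, with minimum cut value k. Fix a tree edge t, and define segments S_1,...,S_{k-1} to the right of t as in the succinct-representation construction (S_i between the i-th and (i+1)-st sorted right endpoints of edges covering t). Then for every tree edge t' ∈ S_i we have Cov(t') ≥ Cov(t) + k − 2i. -/

import Mathlib

/-- In the path-tree model (tree is the path `v_0 - v_1 - ... - v_n`, tree edge `j`
joins `v_{j-1}` and `v_j`), a graph edge `e` with left endpoint `l e` and right
endpoint `r e` covers the tree edge `j` iff it spans it. -/
def pcovers {E : Type*} (l r : E → ℕ) (e : E) (j : ℕ) : Prop :=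
  l e < j ∧ j ≤ r e

/-- same setup as the path-case succinct representation (`ui = u_i` and
`ui1 = u_{i+1}` consecutive sorted right endpoints of edges covering `τ`), and `k` is
the minimum cut value of `G`, so `Cut(τ,j') ≥ k`. Then for every tree edge `j'` in
the segment `S_i`: `Cov(j') ≥ Cov(τ) + k - 2i`. -/
theorem stmt_7 {E : Type*} [Fintype E] (l r : E → ℕ) (k i τ ui ui1 : ℕ)
    (hτui : τ ≤ ui) (hui : ui ≤ ui1)
    (h1 : ({e : E | pcovers l r e τ ∧ r e ≤ ui}).ncard = i)
    (h2 : ∀ e : E, pcovers l r e τ → ¬ (ui < r e ∧ r e < ui1))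
    (j' : ℕ) (hj'l : ui < j') (hj'r : j' ≤ ui1)
    -- k is the minimum cut value, so the 2-respecting cut {τ, j'} has value ≥ k
    (hmin : k ≤ ({e : E | Xor' (pcovers l r e τ) (pcovers l r e j')}).ncard) :
    (({e : E | pcovers l r e τ}).ncard : ℤ) + (k : ℤ) - 2 * (i : ℤ)
      ≤ (({e : E | pcovers l r e j'}).ncard : ℤ) := by
  classical
  set A := {e : E | pcovers l r e τ} with hA
  set B := {e : E | pcovers l r e j'} with hB
  have key : ∀ e, pcovers l r e τ → (pcovers l r e j' ↔ ui < r e) := by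
    intro e he
    constructor
    · intro hj; exact lt_of_lt_of_le hj'l hj.2
    · intro h
      have h2e := h2 e he
      push_neg at h2e
      exact ⟨lt_of_lt_of_le he.1 (hτui.trans hj'l.le),
        hj'r.trans (h2e h)⟩
  have hABeq : {e : E | pcovers l r e τ ∧ r e ≤ ui} = A \ B := by
    ext e
    simp only [hA, hB, Set.mem_setOf_eq, Set.mem_diff]
    constructor
    · rintro ⟨he, hr⟩; exact ⟨he, fun hb => absurd ((key e he).1 hb) (not_lt.2 hr)⟩
    · rintro ⟨he, hb⟩; exact ⟨he, not_lt.1 fun hr => hb ((key e he).2 hr)⟩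
  have hXor : {e : E | Xor' (pcovers l r e τ) (pcovers l r e j')}
      = (A \ B) ∪ (B \ A) := by
    ext e
    simp only [hA, hB, Set.mem_setOf_eq, Set.mem_union, Set.mem_diff, Xor', xor_def]
  have hdisj : Disjoint (A \ B) (B \ A) := disjoint_sdiff_sdiff
  have hAcard := Set.ncard_inter_add_ncard_diff_eq_ncard A B A.toFinite
  have hBcard := Set.ncard_inter_add_ncard_diff_eq_ncard B A B.toFinite
  have hXcard : ({e : E | Xor' (pcovers l r e τ) (pcovers l r e j')}).ncard
      = (A \ B).ncard + (B \ A).ncard := by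
    rw [hXor, Set.ncard_union_eq hdisj (A \ B).toFinite (B \ A).toFinite]
  rw [hABeq] at h1
  rw [hXcard] at hmin
  rw [Set.inter_comm B A] at hBcard
  omega
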